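/- For t > 0 and γ > 0, define the minimax concave penalty p_MCP : ℝ → ℝ by p_MCP(z) = γ|z| − z²/(2t) if |z| ≤ γ·t, and p_MCP(z) = t·γ²/2 if |z| > γ·t. Then for every dimension d ≥ 1, every v ∈ ℝ^d, and every ς > 1/(2t), the function u ↦ ς‖u − v‖₂² + p_MCP(‖u‖₂) is strongly convex on ℝ^d with modulus 2ς − 1/t, i.e., u ↦ ς‖u − v‖₂² + p_MCP(‖u‖₂) − ((2ς − 1/t)/2)‖u‖₂² is convex on ℝ^d. -/

import Mathlib

/-- the MCP penalty composed with the norm, plus `ς‖u−v‖²` with `ς > 1/(2t)`,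
is strongly convex with modulus `2ς − 1/t`. -/
theorem mcp_prox_strongly_convex (t γ : ℝ) (ht : 0 < t) (hγ : 0 < γ)
    (pMCP : ℝ → ℝ)
    (hp : pMCP = fun z =>
      if |z| ≤ γ * t then γ * |z| - z ^ 2 / (2 * t) else t * γ ^ 2 / 2)
    (d : ℕ) (hd : 1 ≤ d) (v : EuclideanSpace ℝ (Fin d)) (ς : ℝ) (hς : 1 / (2 * t) < ς) :
    ConvexOn ℝ Set.univ (fun u : EuclideanSpace ℝ (Fin d) =>
      ς * ‖u - v‖ ^ 2 + pMCP ‖u‖ - ((2 * ς - 1 / t) / 2) * ‖u‖ ^ 2) := by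
  have ht' : (t : ℝ) ≠ 0 := ne_of_gt ht
  -- rewrite the function
  have key : (fun u : EuclideanSpace ℝ (Fin d) =>
      ς * ‖u - v‖ ^ 2 + pMCP ‖u‖ - ((2 * ς - 1 / t) / 2) * ‖u‖ ^ 2)
      = fun u : EuclideanSpace ℝ (Fin d) =>
        (γ * ‖u‖ + (max (‖u‖ - γ * t) 0) ^ 2 / (2 * t)) +
          ((-(2 * ς)) * inner ℝ u v + ς * ‖v‖ ^ 2) := by
    funext u
    have hns : ‖u - v‖ ^ 2 = ‖u‖ ^ 2 - 2 * (inner ℝ u v : ℝ) + ‖v‖ ^ 2 :=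
      norm_sub_sq_real u v
    have habs : |‖u‖| = ‖u‖ := abs_of_nonneg (norm_nonneg u)
    rw [hp, hns]
    simp only [habs]
    by_cases h : ‖u‖ ≤ γ * t
    · rw [if_pos h, max_eq_right (by linarith)]
      field_simp
      ring
    · rw [if_neg h, max_eq_left (by push_neg at h; linarith)]
      field_simp
      ring
  rw [key]
  have h1 : ConvexOn ℝ Set.univ (fun u : EuclideanSpace ℝ (Fin d) => γ * ‖u‖) :=
    convexOn_univ_norm.smul hγ.le
  have h2 : ConvexOn ℝ Set.univ (fun u : EuclideanSpace ℝ (Fin d) => max (‖u‖ - γ * t) 0) := by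
    exact (convexOn_univ_norm.sub (concaveOn_const _ convex_univ)).sup
      (convexOn_const 0 convex_univ)
  have h2' : ConvexOn ℝ Set.univ
      (fun u : EuclideanSpace ℝ (Fin d) => (max (‖u‖ - γ * t) 0) ^ 2 / (2 * t)) := by
    refine ⟨convex_univ, fun x hx y hy a b ha hb hab => ?_⟩
    set mx := max (‖x‖ - γ * t) 0 with hmx
    set my := max (‖y‖ - γ * t) 0 with hmy
    have hM : max (‖a • x + b • y‖ - γ * t) 0 ≤ a * mx + b * my := by
      simpa [smul_eq_mul] using h2.2 hx hy ha hb hab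
    have hM0 : (0:ℝ) ≤ max (‖a • x + b • y‖ - γ * t) 0 := le_max_right _ _
    have hmx0 : (0:ℝ) ≤ mx := le_max_right _ _
    have hmy0 : (0:ℝ) ≤ my := le_max_right _ _
    have hsq : (max (‖a • x + b • y‖ - γ * t) 0) ^ 2 ≤ a * mx ^ 2 + b * my ^ 2 := by
      nlinarith [sq_nonneg (mx - my), mul_nonneg ha hb, mul_nonneg ha hmx0,
        mul_nonneg hb hmy0]
    have h2t : (0:ℝ) < 2 * t := by positivity
    have heq : a • (mx ^ 2 / (2 * t)) + b • (my ^ 2 / (2 * t))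
        = (a * mx ^ 2 + b * my ^ 2) / (2 * t) := by
      simp [smul_eq_mul]; ring
    rw [heq]
    exact (div_le_div_iff_of_pos_right h2t).mpr hsq
  have h3 : ConvexOn ℝ Set.univ (fun u : EuclideanSpace ℝ (Fin d) =>
      (-(2 * ς)) * inner ℝ u v + ς * ‖v‖ ^ 2) := by
    refine ⟨convex_univ, fun x _ y _ a b ha hb hab => le_of_eq ?_⟩
    simp only [inner_add_left, real_inner_smul_left, smul_eq_mul]
    linear_combination (-(ς * ‖v‖ ^ 2)) * hab
  exact (h1.add h2').add h3
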